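/- On the disk D, the square of g equals the twist: for every p ∈ D, g(g(p)) = ψ(p). -/
import Mathlib


open Real MeasureTheory

noncomputable section

instance : Fact (0 < 2 * π) := ⟨by positivity⟩

/-- The cylinder `(ℝ/2πℤ) × ℝ`. -/
abbrev Cyl : Type := AddCircle (2 * π) × ℝ

/-- The quotient map `ℝ² → Cyl`. -/
def q2 (v : ℝ × ℝ) : Cyl := ((v.1 : AddCircle (2 * π)), v.2)

/-- The lift of a point of the cylinder to the fundamental domain `[-π, π) × ℝ`. -/
def cylLift (m : Cyl) : ℝ × ℝ :=
  ((AddCircle.equivIco (2 * π) (-π) m.1 : ℝ), m.2)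

/-- The Euclidean norm on `ℝ × ℝ`. -/
def eNorm (v : ℝ × ℝ) : ℝ := Real.sqrt (v.1 ^ 2 + v.2 ^ 2)

/-- Rotation of the plane about the origin by angle `a`. -/
def rot (a : ℝ) (v : ℝ × ℝ) : ℝ × ℝ :=
  (Real.cos a * v.1 - Real.sin a * v.2, Real.sin a * v.1 + Real.cos a * v.2)

/-- The planar twist map: rotate `v` about the origin by the angle `α (eNorm v)`. -/
def twist (α : ℝ → ℝ) (v : ℝ × ℝ) : ℝ × ℝ := rot (α (eNorm v)) v

/-- The twist map descended to the cylinder. -/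
def psi (α : ℝ → ℝ) (m : Cyl) : Cyl := q2 (twist α (cylLift m))

/-- The half rotation `(θ, s) ↦ (θ + π, s)` of the cylinder. -/
def phi (m : Cyl) : Cyl := (m.1 + ((π : ℝ) : AddCircle (2 * π)), m.2)

/-- The composition `g = φ ∘ ψ`. -/
def gmap (α : ℝ → ℝ) : Cyl → Cyl := phi ∘ psi α

/-- The image in the cylinder of the open Euclidean unit disk centered at the origin. -/
def Dset : Set Cyl := q2 '' {v : ℝ × ℝ | eNorm v < 1}

/-- The distance on the cylinder induced by the Euclidean metric on `ℝ²`. -/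
def cylDist (x y : Cyl) : ℝ := Real.sqrt (dist x.1 y.1 ^ 2 + dist x.2 y.2 ^ 2)

/-- The hypotheses on the twist angle profile `α`: continuous, non-increasing on `[0, ∞)`,
greater than `0.2` on `[0, 0.7]` and vanishing on `[0.9, ∞)`. -/
structure TwistAngle (α : ℝ → ℝ) : Prop where
  cont : Continuous α
  anti : AntitoneOn α (Set.Ici 0)
  big : ∀ r ∈ Set.Icc (0 : ℝ) 0.7, 0.2 < α r
  zero : ∀ r : ℝ, 0.9 ≤ r → α r = 0


lemma hpi : (0:ℝ) < 2 * π := by positivity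

lemma lift_coe (x : ℝ) (hx : x ∈ Set.Ico (-π) π) :
    ((AddCircle.equivIco (2*π) (-π) (x : AddCircle (2*π))) : ℝ) = x := by
  show ((QuotientAddGroup.equivIcoMod hpi (-π) (x : AddCircle (2*π))) : ℝ) = x
  rw [QuotientAddGroup.equivIcoMod_coe]
  exact (toIcoMod_eq_self hpi).mpr (by constructor <;> [exact hx.1; linarith [hx.2]])

lemma eNorm_rot (a : ℝ) (v : ℝ × ℝ) : eNorm (rot a v) = eNorm v := by
  unfold eNorm rot
  dsimp only
  congr 1
  nlinarith [sin_sq_add_cos_sq a]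

lemma abs_fst_le_eNorm (v : ℝ × ℝ) : |v.1| ≤ eNorm v := by
  rw [← Real.sqrt_sq_eq_abs]
  exact Real.sqrt_le_sqrt (by nlinarith [sq_nonneg v.2])

lemma q2_cylLift (m : Cyl) : q2 (cylLift m) = m := by
  unfold q2 cylLift
  exact Prod.ext ((AddCircle.equivIco (2*π) (-π)).symm_apply_apply m.1) rfl

lemma phi0 (m : Cyl) : ((m.1 + ((π:ℝ) : AddCircle (2*π))) + ((π:ℝ) : AddCircle (2*π))) = m.1 := by
  rw [add_assoc, ← AddCircle.coe_add]
  have h : ((π + π : ℝ) : AddCircle (2*π)) = 0 := by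
    rw [show π + π = 2*π by ring]
    exact AddCircle.coe_period (2*π)
  rw [h, add_zero]

lemma rot_zero (v : ℝ × ℝ) : rot 0 v = v := by simp [rot]

lemma phi_phi (m : Cyl) : phi (phi m) = m := Prod.ext (phi0 m) rfl

/-- on the disk D, the square of g equals the twist ψ. -/
theorem gmap_sq_eq_twist_on_disk (α : ℝ → ℝ) (hα : TwistAngle α) :
    ∀ p ∈ Dset, gmap α (gmap α p) = psi α p := by
  rintro p ⟨v, hv, rfl⟩
  have hv' : eNorm v < 1 := hv
  have hπ : (3:ℝ) < π := Real.pi_gt_three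
  have hv1 : |v.1| < 1 := lt_of_le_of_lt (abs_fst_le_eNorm v) hv'
  obtain ⟨hv1a, hv1b⟩ := abs_lt.mp hv1
  have hlift : cylLift (q2 v) = v :=
    Prod.ext (lift_coe v.1 ⟨by linarith, by linarith⟩) rfl
  set w := twist α v with hw
  have hpsi : psi α (q2 v) = q2 w := by rw [psi, hlift]
  have hnw : eNorm w = eNorm v := eNorm_rot _ _
  have hw1 : |w.1| < 1 := by
    have := abs_fst_le_eNorm w; rw [hnw] at this; linarith
  obtain ⟨hw1a, hw1b⟩ := abs_lt.mp hw1
  have hgq : phi (q2 w) = q2 (w.1 + π, w.2) :=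
    Prod.ext (by show (w.1 : AddCircle (2*π)) + _ = ((w.1 + π : ℝ) : AddCircle (2*π)); rw [AddCircle.coe_add]) rfl
  have hg : gmap α (q2 v) = q2 (w.1 + π, w.2) := by
    rw [gmap, Function.comp_apply, hpsi, hgq]
  set t : ℝ := if w.1 < 0 then w.1 + π else w.1 - π with htdef
  have ht : cylLift (q2 (w.1 + π, w.2)) = (t, w.2) := by
    refine Prod.ext ?_ rfl
    show ((QuotientAddGroup.equivIcoMod hpi (-π) ((w.1 + π : ℝ) : AddCircle (2*π))) : ℝ) = t
    rw [QuotientAddGroup.equivIcoMod_coe]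
    rcases lt_or_ge w.1 0 with h | h
    · rw [htdef, if_pos h]
      exact (toIcoMod_eq_self hpi).mpr ⟨by linarith, by linarith⟩
    · rw [htdef, if_neg (not_lt.mpr h)]
      refine (toIcoMod_eq_iff hpi).mpr ⟨⟨by linarith, by linarith⟩, 1, ?_⟩
      simp; ring
  have htabs : (0.9:ℝ) ≤ |t| := by
    rcases lt_or_ge w.1 0 with h | h
    · rw [htdef, if_pos h, abs_of_pos (by linarith)]; linarith
    · rw [htdef, if_neg (not_lt.mpr h), abs_of_neg (by linarith)]; linarith
  have hα0 : α (eNorm (t, w.2)) = 0 :=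
    hα.zero _ (le_trans htabs (abs_fst_le_eNorm (t, w.2)))
  have hψg : psi α (q2 (w.1 + π, w.2)) = q2 (w.1 + π, w.2) := by
    rw [psi, ht, twist, hα0, rot_zero, ← ht, q2_cylLift]
  calc gmap α (gmap α (q2 v)) = gmap α (q2 (w.1 + π, w.2)) := by rw [hg]
    _ = phi (q2 (w.1 + π, w.2)) := by rw [gmap, Function.comp_apply, hψg]
    _ = phi (phi (q2 w)) := by rw [hgq]
    _ = q2 w := phi_phi _
    _ = psi α (q2 v) := hpsi.symm
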